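/- Assume Σ_{i ∈ ℤ/ℓℤ} c_i ≠ 0 and that the representation (V_i, X_i, Y_i, v, y) is simple. Then its ℤ-grading, if it exists, is unique: if (U_j)_{j∈ℤ} and (U′_j)_{j∈ℤ} are both ℤ-gradings of the representation, then U_j = U′_j for every j ∈ ℤ. -/

import Mathlib

open Submodule

/-- A ℤ-grading of a representation `(Vc, X, Y, v, y)` of the (framed) cyclic quiver of
length `ℓ`, realized on a single space `V` with `ℤ/ℓℤ`-components `Vc i`: a family of
subspaces `U j ⊆ V_{j mod ℓ}` indexed by `j ∈ ℤ`, all but finitely many zero, such that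
each `V i` is the internal direct sum of the `U j` over `j ≡ i (mod ℓ)`, compatible with
`X`, `Y`, with `v ∈ U 0`, and with `y` vanishing on `U j` for `j ≠ 0`, `j ≡ 0 (mod ℓ)`. -/
def IsZGrading (ℓ : ℕ) {V : Type} [AddCommGroup V] [Module ℂ V]
    (Vc : ZMod ℓ → Submodule ℂ V) (X Y : V →ₗ[ℂ] V) (v : V) (y : V →ₗ[ℂ] ℂ)
    (U : ℤ → Submodule ℂ V) : Prop :=
  {j : ℤ | U j ≠ ⊥}.Finite ∧
  (∀ j : ℤ, U j ≤ Vc (j : ZMod ℓ)) ∧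
  (∀ i : ZMod ℓ, iSupIndep (fun j : {j : ℤ // (j : ZMod ℓ) = i} => U j.1)) ∧
  (∀ i : ZMod ℓ, (⨆ j : {j : ℤ // (j : ZMod ℓ) = i}, U j.1) = Vc i) ∧
  (∀ j : ℤ, ∀ u ∈ U (j + 1), X u ∈ U j) ∧
  (∀ j : ℤ, ∀ u ∈ U j, Y u ∈ U (j + 1)) ∧
  v ∈ U 0 ∧
  (∀ j : ℤ, j ≠ 0 → (j : ZMod ℓ) = 0 → ∀ u ∈ U j, y u = 0)

section Aux

variable {ℓ : ℕ} [NeZero ℓ] {V : Type} [AddCommGroup V] [Module ℂ V]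

lemma aux_internal {Vc : ZMod ℓ → Submodule ℂ V} (hVc : DirectSum.IsInternal Vc)
    {U : ℤ → Submodule ℂ V}
    (hle : ∀ j : ℤ, U j ≤ Vc (j : ZMod ℓ))
    (hind : ∀ i : ZMod ℓ, iSupIndep (fun j : {j : ℤ // (j : ZMod ℓ) = i} => U j.1))
    (hsup : ∀ i : ZMod ℓ, (⨆ j : {j : ℤ // (j : ZMod ℓ) = i}, U j.1) = Vc i) :
    DirectSum.IsInternal U := by
  rw [DirectSum.isInternal_submodule_iff_iSupIndep_and_iSup_eq_top]
  constructor
  · rw [iSupIndep_def]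
    intro j₀
    rw [Submodule.disjoint_def]
    intro x hx0 hxs
    classical
    set i₀ : ZMod ℓ := (j₀ : ZMod ℓ) with hi₀
    set S : ZMod ℓ → Submodule ℂ V :=
      fun i => ⨆ (j : {j : ℤ // (j : ZMod ℓ) = i}) (_ : j.1 ≠ j₀), U j.1 with hS
    have hSle : ∀ i, S i ≤ Vc i := by
      intro i
      refine iSup₂_le fun j _ => (hle j.1).trans ?_
      rw [j.2]
    have hxS : x ∈ ⨆ i, S i := by
      have hmono : (⨆ (j : ℤ) (_ : j ≠ j₀), U j) ≤ ⨆ i, S i := by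
        refine iSup₂_le fun j hj => ?_
        exact le_iSup_of_le (j : ZMod ℓ)
          (le_iSup₂_of_le (⟨j, rfl⟩ : {k : ℤ // (k : ZMod ℓ) = (j : ZMod ℓ)}) hj le_rfl)
      exact hmono hxs
    obtain ⟨f, hf, hfx⟩ := (Submodule.mem_iSup_iff_exists_finsupp _ _).mp hxS
    have hxVc : x ∈ Vc i₀ := hle j₀ hx0
    have h1 : x - f i₀ ∈ Vc i₀ := sub_mem hxVc (hSle i₀ (hf i₀))
    have h2 : x - f i₀ ∈ ⨆ (i) (_ : i ≠ i₀), Vc i := by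
      have hxsum : x - f i₀ = ∑ i ∈ f.support.erase i₀, f i := by
        by_cases hmem : i₀ ∈ f.support
        · rw [Finset.sum_erase_eq_sub hmem, ← hfx]; rfl
        · have : f i₀ = 0 := Finsupp.notMem_support_iff.mp hmem
          rw [Finset.erase_eq_of_notMem hmem, this, sub_zero, ← hfx]; rfl
      rw [hxsum]
      refine Submodule.sum_mem _ fun i hi => ?_
      have hne : i ≠ i₀ := (Finset.mem_erase.mp hi).1
      exact Submodule.mem_iSup_of_mem i (Submodule.mem_iSup_of_mem hne (hSle i (hf i)))
    have h3 : x - f i₀ = 0 := by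
      have hind' := hVc.submodule_iSupIndep
      rw [iSupIndep_def] at hind'
      exact Submodule.disjoint_def.mp (hind' i₀) _ h1 h2
    have hxSi : x ∈ S i₀ := by
      have hx : x = f i₀ := sub_eq_zero.mp h3
      rw [hx]; exact hf i₀
    -- now use independence within residue class i₀
    have hdisj := (iSupIndep_def.mp (hind i₀)) (⟨j₀, rfl⟩ : {j : ℤ // (j : ZMod ℓ) = i₀})
    refine Submodule.disjoint_def.mp hdisj x hx0 ?_
    refine (iSup₂_le fun j hj => ?_ : S i₀ ≤ _) hxSi
    refine le_iSup₂_of_le j ?_ le_rfl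
    exact fun h => hj (congrArg Subtype.val h)
  · apply top_unique
    rw [← hVc.submodule_iSup_eq_top]
    refine iSup_le fun i => ?_
    rw [← hsup i]
    exact iSup_le fun j => le_iSup U j.1


omit [NeZero ℓ] in
lemma aux_exists_H {U : ℤ → Submodule ℂ V} (hInt : DirectSum.IsInternal U) :
    ∃ H : V →ₗ[ℂ] V, ∀ j : ℤ, ∀ u ∈ U j, H u = (j : ℂ) • u := by
  classical
  set e := LinearEquiv.ofBijective (DirectSum.coeLinearMap U) hInt with he
  set s : (DirectSum ℤ fun j => U j) →ₗ[ℂ] DirectSum ℤ fun j => U j :=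
    { toFun := DFinsupp.mapRange (fun j : ℤ => fun x : U j => (j : ℂ) • x) (fun j => smul_zero _),
      map_add' := fun a b => DFinsupp.mapRange_add (fun j : ℤ => fun x : U j => (j : ℂ) • x) (fun j => smul_zero _) (fun j x y => smul_add _ x y) a b,
      map_smul' := fun c a => DFinsupp.mapRange_smul (fun j : ℤ => fun x : U j => (j : ℂ) • x) (fun j => smul_zero _) c (fun j x => smul_comm _ c x) a } with hs
  refine ⟨(DirectSum.coeLinearMap U) ∘ₗ s ∘ₗ (e.symm : V →ₗ[ℂ] DirectSum ℤ fun j => U j), fun j u hu => ?_⟩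
  have h1 : e.symm u = DirectSum.of (fun j : ℤ => U j) j ⟨u, hu⟩ := by
    apply e.injective
    rw [e.apply_symm_apply]
    simp only [he, LinearEquiv.ofBijective_apply]
    exact (DirectSum.coeLinearMap_of U j ⟨u, hu⟩).symm
  have h2 : s (DirectSum.of (fun j : ℤ => U j) j ⟨u, hu⟩)
      = DirectSum.of (fun j : ℤ => U j) j ((j : ℂ) • ⟨u, hu⟩) := by
    refine DFinsupp.ext fun k => ?_
    show DFinsupp.mapRange (fun j : ℤ => fun x : U j => (j : ℂ) • x) (fun j => smul_zero _) _ k = _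
    rw [DFinsupp.mapRange_apply]
    by_cases hk : k = j
    · subst hk
      rw [DirectSum.of_eq_same, DirectSum.of_eq_same]
    · rw [DirectSum.of_eq_of_ne _ _ _ hk, DirectSum.of_eq_of_ne _ _ _ hk]
      simp
  show DirectSum.coeLinearMap U (s (e.symm u)) = (j : ℂ) • u
  rw [h1, h2, DirectSum.coeLinearMap_of]
  rfl

omit [NeZero ℓ] in
lemma aux_eigen {U : ℤ → Submodule ℂ V} (hInt : DirectSum.IsInternal U)
    {H : V →ₗ[ℂ] V} (hH : ∀ j : ℤ, ∀ u ∈ U j, H u = (j : ℂ) • u)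
    {j : ℤ} {u : V} (hu : H u = (j : ℂ) • u) : u ∈ U j := by
  classical
  set e := LinearEquiv.ofBijective (DirectSum.coeLinearMap U) hInt with he
  set f := e.symm u with hf
  have huf : DirectSum.coeLinearMap U f = u := e.apply_symm_apply u
  have hsum : u = ∑ k ∈ f.support, ((f k : V)) := by
    rw [← huf, DirectSum.coeLinearMap_eq_dfinsuppSum]; rfl
  have hkey : ∑ k ∈ f.support, (((k : ℂ) - (j : ℂ)) • (f k : V)) = 0 := by
    have hH1 : H u = ∑ k ∈ f.support, ((k : ℂ) • (f k : V)) := by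
      rw [hsum, map_sum]
      exact Finset.sum_congr rfl fun k _ => hH k _ (f k).2
    have hH2 : (j : ℂ) • u = ∑ k ∈ f.support, ((j : ℂ) • (f k : V)) := by
      rw [hsum, Finset.smul_sum]
    calc ∑ k ∈ f.support, (((k : ℂ) - (j : ℂ)) • (f k : V))
        = ∑ k ∈ f.support, ((k : ℂ) • (f k : V) - (j : ℂ) • (f k : V)) := by
          exact Finset.sum_congr rfl fun k _ => sub_smul _ _ _
      _ = H u - (j : ℂ) • u := by rw [Finset.sum_sub_distrib, hH1, hH2]
      _ = 0 := by rw [hu, sub_self]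
  set g : DirectSum ℤ (fun k => U k) :=
    DFinsupp.mapRange (fun k (x : U k) => ((k : ℂ) - (j : ℂ)) • x) (fun k => smul_zero _) f with hg
  have hg0 : g = 0 := by
    have hinj : Function.Injective (DirectSum.coeLinearMap U) := hInt.injective
    apply hinj
    rw [map_zero, DirectSum.coeLinearMap_eq_dfinsuppSum]
    show ∑ k ∈ g.support, ((g k : V)) = 0
    calc ∑ k ∈ g.support, ((g k : V))
        = ∑ k ∈ f.support, ((g k : V)) := by
          refine Finset.sum_subset DFinsupp.support_mapRange fun k _ hk => ?_
          rw [DFinsupp.notMem_support_iff.mp hk]; rfl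
      _ = ∑ k ∈ f.support, (((k : ℂ) - (j : ℂ)) • (f k : V)) := by
          refine Finset.sum_congr rfl fun k _ => ?_
          simp [hg, DFinsupp.mapRange_apply]
      _ = 0 := hkey
  have hfk : ∀ k : ℤ, k ≠ j → f k = 0 := by
    intro k hk
    have : ((k : ℂ) - (j : ℂ)) • f k = 0 := by
      have := congrArg (fun (x : DirectSum ℤ fun k => U k) => x k) hg0
      simpa [hg, DFinsupp.mapRange_apply] using this
    have hne : ((k : ℂ) - (j : ℂ)) ≠ 0 := sub_ne_zero.mpr (by exact_mod_cast hk)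
    exact (smul_eq_zero.mp this).resolve_left hne
  rw [hsum]
  refine Submodule.sum_mem _ fun k hk => ?_
  by_cases hkj : k = j
  · subst hkj; exact (f k).2
  · rw [hfk k hkj]; simp

end Aux

/-- Assume `Σ_{i ∈ ℤ/ℓℤ} c_i ≠ 0` and that the representation `(V_i, X_i, Y_i, v, y)`
of the framed cyclic quiver (with moment map relations with parameter `c`) is simple.
Then its ℤ-grading, if it exists, is unique: if `(U_j)` and `(U′_j)` are both
ℤ-gradings of the representation, then `U_j = U′_j` for every `j ∈ ℤ`. -/
theorem zgrading_unique (ℓ : ℕ) [NeZero ℓ] (c : ZMod ℓ → ℂ)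
    (hc : (∑ i : ZMod ℓ, c i) ≠ 0)
    (V : Type) [AddCommGroup V] [Module ℂ V] [FiniteDimensional ℂ V]
    (Vc : ZMod ℓ → Submodule ℂ V) (hVc : DirectSum.IsInternal Vc)
    (X Y : V →ₗ[ℂ] V)
    (hX : ∀ i : ZMod ℓ, ∀ u ∈ Vc i, X u ∈ Vc (i - 1))
    (hY : ∀ i : ZMod ℓ, ∀ u ∈ Vc i, Y u ∈ Vc (i + 1))
    (v : V) (hv : v ∈ Vc 0)
    (y : V →ₗ[ℂ] ℂ) (hy : ∀ i : ZMod ℓ, i ≠ 0 → ∀ u ∈ Vc i, y u = 0)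
    (hmoment : ∀ i : ZMod ℓ, ∀ u ∈ Vc i,
      X (Y u) - Y (X u) + (if i = 0 then y u • v else 0) = c i • u)
    (hsimple : ∀ (W : ZMod ℓ → Submodule ℂ V) (Winf : Submodule ℂ ℂ),
      (∀ i, W i ≤ Vc i) →
      (∀ i : ZMod ℓ, ∀ u ∈ W i, X u ∈ W (i - 1)) →
      (∀ i : ZMod ℓ, ∀ u ∈ W i, Y u ∈ W (i + 1)) →
      (∀ lam ∈ Winf, lam • v ∈ W 0) →
      (∀ u ∈ W 0, y u ∈ Winf) →
      ((∀ i, W i = ⊥) ∧ Winf = ⊥) ∨ ((∀ i, W i = Vc i) ∧ Winf = ⊤))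
    (U U' : ℤ → Submodule ℂ V)
    (hU : IsZGrading ℓ Vc X Y v y U) (hU' : IsZGrading ℓ Vc X Y v y U') :
    ∀ j : ℤ, U j = U' j := by
  classical
  obtain ⟨-, hle, hind, hsupU, hXU, hYU, hvU, -⟩ := hU
  obtain ⟨-, hle', hind', hsupU', hXU', hYU', hvU', -⟩ := hU'
  have hInt : DirectSum.IsInternal U := aux_internal hVc hle hind hsupU
  have hInt' : DirectSum.IsInternal U' := aux_internal hVc hle' hind' hsupU'
  obtain ⟨H, hH⟩ := aux_exists_H hInt
  obtain ⟨H', hH'⟩ := aux_exists_H hInt'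
  -- commutation relations
  have commX : ∀ (K : V →ₗ[ℂ] V) (W : ℤ → Submodule ℂ V), DirectSum.IsInternal W →
      (∀ j : ℤ, ∀ u ∈ W j, K u = (j : ℂ) • u) →
      (∀ j : ℤ, ∀ u ∈ W (j + 1), X u ∈ W j) →
      ∀ u : V, K (X u) = X (K u) - X u := by
    intro K W hW hK hXW u
    have hloc : (⊤ : Submodule ℂ V) ≤ LinearMap.eqLocus (K ∘ₗ X) (X ∘ₗ K - X) := by
      rw [← hW.submodule_iSup_eq_top]
      refine iSup_le fun j => ?_
      intro w hw
      rw [LinearMap.mem_eqLocus]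
      have h1 : X w ∈ W (j - 1) := hXW (j - 1) w (by simpa using hw)
      simp only [LinearMap.comp_apply, LinearMap.sub_apply]
      rw [hK _ _ h1, hK _ _ hw, map_smul]
      push_cast
      rw [sub_smul, one_smul]
    have hres := LinearMap.mem_eqLocus.mp (hloc (Submodule.mem_top : u ∈ ⊤))
    simpa only [LinearMap.comp_apply, LinearMap.sub_apply] using hres
  have commY : ∀ (K : V →ₗ[ℂ] V) (W : ℤ → Submodule ℂ V), DirectSum.IsInternal W →
      (∀ j : ℤ, ∀ u ∈ W j, K u = (j : ℂ) • u) →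
      (∀ j : ℤ, ∀ u ∈ W j, Y u ∈ W (j + 1)) →
      ∀ u : V, K (Y u) = Y (K u) + Y u := by
    intro K W hW hK hYW u
    have hloc : (⊤ : Submodule ℂ V) ≤ LinearMap.eqLocus (K ∘ₗ Y) (Y ∘ₗ K + Y) := by
      rw [← hW.submodule_iSup_eq_top]
      refine iSup_le fun j => ?_
      intro w hw
      rw [LinearMap.mem_eqLocus]
      have h1 : Y w ∈ W (j + 1) := hYW j w hw
      simp only [LinearMap.comp_apply, LinearMap.add_apply]
      rw [hK _ _ h1, hK _ _ hw, map_smul]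
      push_cast
      rw [add_smul, one_smul]
    have hres := LinearMap.mem_eqLocus.mp (hloc (Submodule.mem_top : u ∈ ⊤))
    simpa only [LinearMap.comp_apply, LinearMap.add_apply] using hres
  have hHX := commX H U hInt hH hXU
  have hH'X := commX H' U' hInt' hH' hXU'
  have hHY := commY H U hInt hH hYU
  have hH'Y := commY H' U' hInt' hH' hYU'
  set W : ZMod ℓ → Submodule ℂ V := fun i => Vc i ⊓ LinearMap.ker (H - H') with hWdef
  have hker : ∀ u : V, u ∈ LinearMap.ker (H - H') ↔ H u = H' u := by
    intro u; rw [LinearMap.mem_ker, LinearMap.sub_apply, sub_eq_zero]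
  have hv0 : v ∈ W 0 := by
    refine Submodule.mem_inf.mpr ⟨hv, (hker v).mpr ?_⟩
    rw [hH 0 v hvU, hH' 0 v hvU']
  have hcase := hsimple W ⊤ (fun i => inf_le_left)
    (fun i u hu => by
      obtain ⟨h1, h2⟩ := Submodule.mem_inf.mp hu
      refine Submodule.mem_inf.mpr ⟨hX i u h1, (hker _).mpr ?_⟩
      rw [hHX u, hH'X u, (hker u).mp h2])
    (fun i u hu => by
      obtain ⟨h1, h2⟩ := Submodule.mem_inf.mp hu
      refine Submodule.mem_inf.mpr ⟨hY i u h1, (hker _).mpr ?_⟩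
      rw [hHY u, hH'Y u, (hker u).mp h2])
    (fun lam _ => Submodule.smul_mem _ lam hv0)
    (fun u _ => Submodule.mem_top)
  rcases hcase with ⟨-, htop⟩ | ⟨hWeq, -⟩
  · exact absurd htop top_ne_bot
  · have hVker : ∀ i, Vc i ≤ LinearMap.ker (H - H') :=
      fun i => (hWeq i).ge.trans inf_le_right
    have hHH' : H = H' := by
      have hker_top : LinearMap.ker (H - H') = ⊤ :=
        top_unique (by rw [← hVc.submodule_iSup_eq_top]; exact iSup_le hVker)
      exact sub_eq_zero.mp (LinearMap.ker_eq_top.mp hker_top)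
    intro j
    apply le_antisymm
    · intro u hu
      exact aux_eigen hInt' hH' (by rw [← hHH']; exact hH j u hu)
    · intro u hu
      exact aux_eigen hInt hH (by rw [hHH']; exact hH' j u hu)
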